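/- Habiro's two formulas for the colored Jones polynomial of the left-handed trefoil agree: for every integer n ≥ 1, ∑_{m ≥ 0} qᵐ (q^{n+1}; q)_m (q^{1−n}; q)_m = q^{n−1} ∑_{m ≥ 0} q^{mn} (q^{n−m}; q)_m, as Laurent polynomials in q. Both sums are finite: on the left the terms vanish for m ≥ n because (q^{1−n}; q)_m contains the factor (1 − q^{1−n}q^{n−1}) = 0, and on the right the terms vanish for m ≥ n because (q^{n−m}; q)_m contains the factor 1 − q⁰ = 0. -/

import Mathlib

open LaurentPolynomial Finset

section TrefoilAux

variable {F : Type*} [Field F]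

/-- `(x^a ; x)_m = ∏_{j<m} (1 - x^{a+j})`. -/
private noncomputable def pp (x : F) (a : ℤ) (m : ℕ) : F :=
  ∏ j ∈ Finset.range m, (1 - x ^ (a + (j : ℤ)))

private lemma pp_zero (x : F) (a : ℤ) : pp x a 0 = 1 := by simp [pp]

private lemma pp_succ (x : F) (a : ℤ) (m : ℕ) :
    pp x a (m + 1) = pp x a m * (1 - x ^ (a + (m : ℤ))) := by
  rw [pp, pp, Finset.prod_range_succ]

private lemma pp_succ' (x : F) (a : ℤ) (m : ℕ) :
    pp x a (m + 1) = (1 - x ^ a) * pp x (a + 1) m := by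
  rw [pp, Finset.prod_range_succ', mul_comm]
  congr 1
  · norm_num
  · rw [pp]
    apply Finset.prod_congr rfl
    intro j _
    congr 1
    push_cast
    ring

private lemma pp_eq_zero (x : F) {a : ℤ} {m : ℕ} (ha : a ≤ 0) (hm : -a < (m : ℤ)) :
    pp x a m = 0 := by
  apply Finset.prod_eq_zero (i := (-a).toNat)
  · rw [Finset.mem_range]
    omega
  · rw [show a + (((-a).toNat : ℕ) : ℤ) = 0 by omega, zpow_zero, sub_self]

/-- Telescoping certificate for the cyclotomic side. -/
private noncomputable def gg1 (x : F) (n : ℤ) (m : ℕ) : F :=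
  (x ^ n - 1) * (1 - x * (x ^ n) ^ 2) * (1 - x * x ^ n) * (pp x (n + 1 + 1) m * pp x (1 - n) m)

/-- Telescoping certificate for the Habiro side. -/
private noncomputable def gg2 (x : F) (n : ℤ) (m : ℕ) : F :=
  -(x * (x ^ n - 1) * (x * x ^ (m : ℤ) - x * (x ^ n) ^ 2) *
      ((x ^ n) ^ (m : ℤ) * (x ^ n) ^ 2 * x⁻¹) * pp x (n - (m : ℤ)) m)

private lemma step1 (x : F) (hx : x ≠ 0) (n m : ℕ) :
      (1 - x ^ ((n : ℤ) + 1)) *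
          (x ^ ((m + 1 : ℕ) : ℤ) *
            (pp x ((n : ℤ) + 1 + 1) (m + 1) * pp x (1 - ((n : ℤ) + 1)) (m + 1)))
        + x ^ (3 * (n : ℤ) + 2) * (1 - x ^ (n : ℤ)) *
          (x ^ ((m + 1 : ℕ) : ℤ) *
            (pp x ((n : ℤ) + 1) (m + 1) * pp x (1 - (n : ℤ)) (m + 1)))
      = gg1 x (n : ℤ) m - gg1 x (n : ℤ) (m + 1) := by
  have hy : x ^ (n : ℤ) ≠ 0 := zpow_ne_zero _ hx
  have hw : x ^ (m : ℤ) ≠ 0 := zpow_ne_zero _ hx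
  simp only [gg1]
  rw [pp_succ x ((n : ℤ) + 1 + 1) m, pp_succ' x (1 - ((n : ℤ) + 1)) m,
    pp_succ' x ((n : ℤ) + 1) m, pp_succ x (1 - (n : ℤ)) m]
  rw [show (1 : ℤ) - ((n : ℤ) + 1) + 1 = 1 - (n : ℤ) by ring,
    show (1 : ℤ) - ((n : ℤ) + 1) = -(n : ℤ) by ring]
  push_cast
  simp only [zpow_add₀ hx, zpow_sub₀ hx, zpow_one, zpow_neg, zpow_mul', zpow_ofNat,
    div_eq_mul_inv]
  field_simp
  ring

private lemma step2 (x : F) (hx : x ≠ 0) (n m : ℕ) :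
      (1 - x ^ ((n : ℤ) + 1)) *
          (x ^ ((n : ℤ) + 1 - 1 + ((m + 1 : ℕ) : ℤ) * ((n : ℤ) + 1)) *
            pp x ((n : ℤ) + 1 - ((m + 1 : ℕ) : ℤ)) (m + 1))
        + x ^ (3 * (n : ℤ) + 2) * (1 - x ^ (n : ℤ)) *
          (x ^ ((n : ℤ) - 1 + ((m + 1 : ℕ) : ℤ) * (n : ℤ)) *
            pp x ((n : ℤ) - ((m + 1 : ℕ) : ℤ)) (m + 1))
      = gg2 x (n : ℤ) m - gg2 x (n : ℤ) (m + 1) := by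
  have hy : x ^ (n : ℤ) ≠ 0 := zpow_ne_zero _ hx
  have hw : x ^ (m : ℤ) ≠ 0 := zpow_ne_zero _ hx
  have hz : (x ^ (n : ℤ)) ^ (m : ℤ) ≠ 0 := zpow_ne_zero _ hy
  simp only [gg2]
  push_cast
  rw [show (n : ℤ) + 1 - ((m : ℤ) + 1) = (n : ℤ) - (m : ℤ) by ring,
    show (n : ℤ) - ((m : ℤ) + 1) = (n : ℤ) - (m : ℤ) - 1 by ring]
  rw [pp_succ x ((n : ℤ) - (m : ℤ)) m, pp_succ' x ((n : ℤ) - (m : ℤ) - 1) m,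
    show (n : ℤ) - (m : ℤ) - 1 + 1 = (n : ℤ) - (m : ℤ) by ring]
  rw [show (n : ℤ) + 1 - 1 + ((m : ℤ) + 1) * ((n : ℤ) + 1)
        = (m : ℤ) * (n : ℤ) + ((m : ℤ) + ((n : ℤ) + ((n : ℤ) + 1))) by ring,
    show (n : ℤ) - 1 + ((m : ℤ) + 1) * (n : ℤ)
        = (m : ℤ) * (n : ℤ) + ((n : ℤ) + ((n : ℤ) - 1)) by ring,
    show (n : ℤ) - (m : ℤ) + (m : ℤ) = (n : ℤ) by ring]
  have hxm : x ^ m ≠ 0 := pow_ne_zero _ hx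
  have hxn : x ^ n ≠ 0 := pow_ne_zero _ hx
  simp only [zpow_add₀ hx, zpow_sub₀ hx, zpow_add₀ hy, zpow_sub₀ hy, zpow_one, zpow_neg,
    zpow_mul', zpow_ofNat, div_eq_mul_inv, inv_pow]
  field_simp
  ring

/-- The inhomogeneous first-order recurrence, for the cyclotomic side. -/
private lemma side1 (x : F) (hx : x ≠ 0) (n : ℕ) (hn : 1 ≤ n) :
    (1 - x ^ ((n : ℤ) + 1)) *
        (∑ m ∈ Finset.range (n + 1),
          x ^ (m : ℤ) * (pp x ((n : ℤ) + 1 + 1) m * pp x (1 - ((n : ℤ) + 1)) m))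
      + x ^ (3 * (n : ℤ) + 2) * (1 - x ^ (n : ℤ)) *
        (∑ m ∈ Finset.range n,
          x ^ (m : ℤ) * (pp x ((n : ℤ) + 1) m * pp x (1 - (n : ℤ)) m))
      = x ^ (n : ℤ) * (1 - x ^ (2 * (n : ℤ) + 1)) := by
  have hy : x ^ (n : ℤ) ≠ 0 := zpow_ne_zero _ hx
  have hzero : pp x (1 - (n : ℤ)) n = 0 := pp_eq_zero x (by omega) (by omega)
  have hext : (∑ m ∈ Finset.range n,
        x ^ (m : ℤ) * (pp x ((n : ℤ) + 1) m * pp x (1 - (n : ℤ)) m))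
      = ∑ m ∈ Finset.range (n + 1),
        x ^ (m : ℤ) * (pp x ((n : ℤ) + 1) m * pp x (1 - (n : ℤ)) m) := by
    rw [Finset.sum_range_succ, hzero]
    ring
  rw [hext, Finset.mul_sum, Finset.mul_sum, ← Finset.sum_add_distrib, Finset.sum_range_succ']
  rw [Finset.sum_congr rfl (fun m _ => step1 x hx n m), Finset.sum_range_sub' (gg1 x (n : ℤ))]
  have hgn : gg1 x (n : ℤ) n = 0 := by
    rw [gg1, hzero]
    ring
  rw [hgn, gg1]
  simp only [pp_zero, Nat.cast_zero]
  simp only [zpow_add₀ hx, zpow_sub₀ hx, zpow_one, zpow_neg, zpow_mul', zpow_ofNat,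
    div_eq_mul_inv, zpow_zero]
  field_simp
  ring

/-- The inhomogeneous first-order recurrence, for the Habiro side. -/
private lemma side2 (x : F) (hx : x ≠ 0) (n : ℕ) (hn : 1 ≤ n) :
    (1 - x ^ ((n : ℤ) + 1)) *
        (∑ m ∈ Finset.range (n + 1),
          x ^ ((n : ℤ) + 1 - 1 + (m : ℤ) * ((n : ℤ) + 1)) * pp x ((n : ℤ) + 1 - (m : ℤ)) m)
      + x ^ (3 * (n : ℤ) + 2) * (1 - x ^ (n : ℤ)) *
        (∑ m ∈ Finset.range n,
          x ^ ((n : ℤ) - 1 + (m : ℤ) * (n : ℤ)) * pp x ((n : ℤ) - (m : ℤ)) m)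
      = x ^ (n : ℤ) * (1 - x ^ (2 * (n : ℤ) + 1)) := by
  have hy : x ^ (n : ℤ) ≠ 0 := zpow_ne_zero _ hx
  have hzero : pp x ((n : ℤ) - (n : ℤ)) n = 0 := pp_eq_zero x (by omega) (by omega)
  have hext : (∑ m ∈ Finset.range n,
        x ^ ((n : ℤ) - 1 + (m : ℤ) * (n : ℤ)) * pp x ((n : ℤ) - (m : ℤ)) m)
      = ∑ m ∈ Finset.range (n + 1),
        x ^ ((n : ℤ) - 1 + (m : ℤ) * (n : ℤ)) * pp x ((n : ℤ) - (m : ℤ)) m := by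
    rw [Finset.sum_range_succ, hzero]
    ring
  rw [hext, Finset.mul_sum, Finset.mul_sum, ← Finset.sum_add_distrib, Finset.sum_range_succ']
  rw [Finset.sum_congr rfl (fun m _ => step2 x hx n m), Finset.sum_range_sub' (gg2 x (n : ℤ))]
  have hgn : gg2 x (n : ℤ) n = 0 := by
    rw [gg2, hzero]
    ring
  rw [hgn, gg2]
  simp only [pp_zero, Nat.cast_zero]
  simp only [zpow_add₀ hx, zpow_sub₀ hx, zpow_one, zpow_neg, zpow_mul', zpow_ofNat,
    div_eq_mul_inv, zpow_zero]
  field_simp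
  ring

/-- Equality of the two sums, over any field, for an `x` avoiding roots of unity. -/
private lemma main_eq (x : F) (hx : x ≠ 0)
    (hnz : ∀ k : ℤ, k ≠ 0 → (1 : F) - x ^ k ≠ 0) :
    ∀ N : ℕ, 1 ≤ N →
      (∑ m ∈ Finset.range N, x ^ (m : ℤ) * (pp x ((N : ℤ) + 1) m * pp x (1 - (N : ℤ)) m))
        = ∑ m ∈ Finset.range N,
            x ^ ((N : ℤ) - 1 + (m : ℤ) * (N : ℤ)) * pp x ((N : ℤ) - (m : ℤ)) m := by
  intro N hN
  induction N, hN using Nat.le_induction with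
  | base => simp [pp_zero]
  | succ N hN ih =>
      have h1 := side1 x hx N hN
      have h2 := side2 x hx N hN
      rw [ih] at h1
      have hcan : (1 - x ^ ((N : ℤ) + 1)) *
          (∑ m ∈ Finset.range (N + 1),
            x ^ (m : ℤ) * (pp x ((N : ℤ) + 1 + 1) m * pp x (1 - ((N : ℤ) + 1)) m))
        = (1 - x ^ ((N : ℤ) + 1)) *
          (∑ m ∈ Finset.range (N + 1),
            x ^ ((N : ℤ) + 1 - 1 + (m : ℤ) * ((N : ℤ) + 1)) * pp x ((N : ℤ) + 1 - (m : ℤ)) m) := by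
        linear_combination h1 - h2
      have hc := mul_left_cancel₀ (hnz ((N : ℤ) + 1) (by omega)) hcan
      push_cast
      rw [hc]

end TrefoilAux

private instance : IsDomain (LaurentPolynomial ℤ) := NoZeroDivisors.to_isDomain _

/-- Habiro's two formulas for the colored Jones polynomial of the left-handed trefoil agree:
for every `n ≥ 1`, in `ℤ[q, q⁻¹]`,
`∑_{m=0}^{n−1} qᵐ (q^{n+1}; q)_m (q^{1−n}; q)_m = q^{n−1} ∑_{m=0}^{n−1} q^{mn} (q^{n−m}; q)_m`,
where `(x; q)_m = ∏_{j=0}^{m−1} (1 − x qʲ)`. (Both sums are restricted to `m < n` since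
the remaining terms vanish.) -/
theorem trefoil_cyclotomic_eq_habiro (n : ℕ) (hn : 1 ≤ n) :
    (∑ m ∈ Finset.range n, (T (m : ℤ) : LaurentPolynomial ℤ) *
        ((∏ j ∈ Finset.range m, (1 - T ((n : ℤ) + 1 + (j : ℤ)))) *
         (∏ j ∈ Finset.range m, (1 - T (1 - (n : ℤ) + (j : ℤ))))))
      = T ((n : ℤ) - 1) * ∑ m ∈ Finset.range n,
          T ((m : ℤ) * (n : ℤ)) * ∏ j ∈ Finset.range m, (1 - T ((n : ℤ) - (m : ℤ) + (j : ℤ))) := by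
  classical
  set R := LaurentPolynomial ℤ
  let K := FractionRing R
  let θ : R →+* K := (algebraMap R K : R →+* K)
  have hinj : Function.Injective θ := IsFractionRing.injective R K
  set x : K := θ (T 1) with hxdef
  have hx : x ≠ 0 := by
    rw [hxdef]
    intro h0
    have : (T 1 : R) = 0 := hinj (by rw [h0, map_zero])
    exact (isUnit_T 1).ne_zero this
  have hTinv : θ (T (-1)) = x⁻¹ := by
    apply eq_inv_of_mul_eq_one_left
    rw [hxdef, ← map_mul, ← T_add]
    norm_num
  have hT : ∀ k : ℤ, θ (T k) = x ^ k := by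
    intro k
    induction k using Int.induction_on with
    | zero => simp
    | succ i ih =>
        rw [T_add, map_mul, ih, zpow_add₀ hx, zpow_one]
    | pred i ih =>
        rw [show (-(i : ℤ) - 1) = (-(i : ℤ)) + (-1) by ring, T_add, map_mul, ih, hTinv,
          zpow_add₀ hx, zpow_neg_one]
  have hnz : ∀ k : ℤ, k ≠ 0 → (1 : K) - x ^ k ≠ 0 := by
    intro k hk h0
    have h2 : (1 : R) - T k = 0 := by
      apply hinj
      rw [map_sub, map_one, hT k, map_zero, h0]
    have h3 : (T k : R) = 1 := (sub_eq_zero.mp h2).symm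
    have h4 := congrArg LaurentPolynomial.degree h3
    rw [degree_T, ← T_zero, degree_T] at h4
    exact hk (by exact_mod_cast h4)
  have hmain := main_eq x hx hnz n hn
  apply hinj
  rw [map_sum, map_mul, map_sum]
  calc (∑ m ∈ Finset.range n, θ ((T (m : ℤ) : R) *
        ((∏ j ∈ Finset.range m, (1 - T ((n : ℤ) + 1 + (j : ℤ)))) *
         (∏ j ∈ Finset.range m, (1 - T (1 - (n : ℤ) + (j : ℤ)))))))
      = ∑ m ∈ Finset.range n, x ^ (m : ℤ) * (pp x ((n : ℤ) + 1) m * pp x (1 - (n : ℤ)) m) := by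
        apply Finset.sum_congr rfl
        intro m _
        rw [map_mul, map_mul, map_prod, map_prod, hT, pp, pp]
        congr 1
        congr 1
        · apply Finset.prod_congr rfl
          intro j _
          rw [map_sub, map_one, hT]
        · apply Finset.prod_congr rfl
          intro j _
          rw [map_sub, map_one, hT]
    _ = ∑ m ∈ Finset.range n,
          x ^ ((n : ℤ) - 1 + (m : ℤ) * (n : ℤ)) * pp x ((n : ℤ) - (m : ℤ)) m := hmain
    _ = θ (T ((n : ℤ) - 1)) * ∑ m ∈ Finset.range n, θ ((T ((m : ℤ) * (n : ℤ)) : R) *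
          ∏ j ∈ Finset.range m, (1 - T ((n : ℤ) - (m : ℤ) + (j : ℤ)))) := by
        rw [hT, Finset.mul_sum]
        apply Finset.sum_congr rfl
        intro m _
        rw [map_mul, map_prod, hT]
        rw [show ((n : ℤ) - 1 + (m : ℤ) * (n : ℤ)) = ((n : ℤ) - 1) + ((m : ℤ) * (n : ℤ)) by ring,
          zpow_add₀ hx, mul_assoc]
        congr 1
        congr 1
        rw [pp]
        apply Finset.prod_congr rfl
        intro j _
        rw [map_sub, map_one, hT]
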